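/- Let ν > 1 and 1/ν + 1/ν² < F < 2, and set H_R := 1/ν² and H_* := (−ν−1+√(8F²ν⁴+ν²+2ν+1)) H_R/(2(ν+1)). Then H_*(H_R + √H_R + 1)² − H_R(2F² + 1) > 0. -/

import Mathlib

open Real

set_option maxHeartbeats 1000000 in
/-- Appendix inequality 3 (key estimate for `c₁ < f₂(H_*)/2`): in the
discontinuous-profile regime, `H_*(H_R + √H_R + 1)² − H_R(2F² + 1) > 0`. -/
theorem Hstar_boundary_estimate (F nu : ℝ) (hnu : 1 < nu)
    (hFlow : 1 / nu + 1 / nu ^ 2 < F) (hF2 : F < 2) :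
    let HR := 1 / nu ^ 2
    let Hstar := (-nu - 1 + Real.sqrt (8 * F ^ 2 * nu ^ 4 + nu ^ 2 + 2 * nu + 1)) * HR /
      (2 * (nu + 1))
    Hstar * (HR + Real.sqrt HR + 1) ^ 2 - HR * (2 * F ^ 2 + 1) > 0 := by
  intro HR Hstar
  have hx0 : (0:ℝ) < nu := lt_trans one_pos hnu
  have hx0' : nu ≠ 0 := ne_of_gt hx0
  have ht : (0:ℝ) < nu - 1 := by linarith
  have hnu1 : (0:ℝ) < nu + 1 := by linarith
  have hF0 : (0:ℝ) < F := by
    have h1 : (0:ℝ) < 1 / nu + 1 / nu ^ 2 := by positivity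
    linarith
  have hFnu : nu + 1 < F * nu ^ 2 := by
    have h2 : (nu + 1) / nu ^ 2 < F := by
      have he : 1 / nu + 1 / nu ^ 2 = (nu + 1) / nu ^ 2 := by
        field_simp
      linarith [he ▸ hFlow]
    exact (div_lt_iff₀ (by positivity)).mp h2
  have ha' : 0 < F ^ 2 * nu ^ 4 - (nu + 1) ^ 2 := by
    have h3 : 0 < F * nu ^ 2 - (nu + 1) := by linarith
    have h4 : 0 < F * nu ^ 2 + (nu + 1) := by positivity
    nlinarith [mul_pos h3 h4]
  have hb : 0 < 4 - F ^ 2 := by nlinarith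
  have hM : 0 < 4 * nu ^ 4 - (nu + 1) ^ 2 := by
    have h5 : nu + 1 < 2 * nu ^ 2 := by nlinarith
    have h6 : 0 < 2 * nu ^ 2 + (nu + 1) := by positivity
    nlinarith [mul_pos (show (0:ℝ) < 2 * nu ^ 2 - (nu + 1) by linarith) h6]
  -- Q := value of the key quadratic at the lower endpoint (scaled)
  have hQ : 0 < 2 * ((nu ^ 2 + nu + 1) ^ 2) ^ 2 - 2 * (nu + 1) ^ 2 * (nu ^ 2 + nu + 1) ^ 2
      - 4 * (nu + 1) ^ 4 - 4 * (nu + 1) ^ 2 * nu ^ 4 - nu ^ 4 * (nu ^ 2 + nu + 1) ^ 2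
      - nu ^ 8 := by
    nlinarith [pow_pos ht 1, pow_pos ht 2, pow_pos ht 3, pow_pos ht 4, pow_pos ht 5,
      pow_pos ht 6, pow_pos ht 7]
  -- P4 := value of the key quadratic at the upper endpoint
  have hP4 : 0 ≤ 8 * ((nu ^ 2 + nu + 1) ^ 2) ^ 2 - 9 * (nu + 1) ^ 2 * (nu ^ 2 + nu + 1) ^ 2
      - 81 * (nu + 1) ^ 2 * nu ^ 4 := by
    nlinarith [pow_pos ht 2, pow_pos ht 3, pow_pos ht 4, pow_pos ht 5, pow_pos ht 6,
      pow_pos ht 7, pow_pos ht 8]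
  have hsq : 0 < (nu + 1) ^ 2 := by positivity
  -- the key quadratic in F² is positive
  have hP : 0 < -(4 * (nu + 1) ^ 2 * nu ^ 4) * (F ^ 2) ^ 2
      + (2 * ((nu ^ 2 + nu + 1) ^ 2) ^ 2 - 2 * (nu + 1) ^ 2 * (nu ^ 2 + nu + 1) ^ 2
        - 4 * (nu + 1) ^ 2 * nu ^ 4) * F ^ 2
      - (nu + 1) ^ 2 * ((nu ^ 2 + nu + 1) ^ 2 + nu ^ 4) := by
    have hMP : 0 < (4 * nu ^ 4 - (nu + 1) ^ 2) *
        (-(4 * (nu + 1) ^ 2 * nu ^ 4) * (F ^ 2) ^ 2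
        + (2 * ((nu ^ 2 + nu + 1) ^ 2) ^ 2 - 2 * (nu + 1) ^ 2 * (nu ^ 2 + nu + 1) ^ 2
          - 4 * (nu + 1) ^ 2 * nu ^ 4) * F ^ 2
        - (nu + 1) ^ 2 * ((nu ^ 2 + nu + 1) ^ 2 + nu ^ 4)) := by
      nlinarith [mul_pos (mul_pos hb hQ) hsq,
        mul_nonneg ha'.le hP4,
        mul_pos (mul_pos (mul_pos ha' hb) hM) hsq]
    nlinarith [hMP, hM]
  have hnu1' : nu + 1 ≠ 0 := ne_of_gt hnu1
  have hDpos : (0:ℝ) < (nu ^ 2 + nu + 1) ^ 2 := by positivity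
  have hA0 : 0 ≤ (nu + 1) + 2 * (nu + 1) * nu ^ 4 * (2 * F ^ 2 + 1) / ((nu ^ 2 + nu + 1) ^ 2) := by
    have hnum : 0 ≤ 2 * (nu + 1) * nu ^ 4 * (2 * F ^ 2 + 1) := by
      have h7 : (0:ℝ) < nu ^ 4 := by positivity
      nlinarith [mul_pos hnu1 h7]
    have := div_nonneg hnum hDpos.le
    linarith
  have hAS : (nu + 1) + 2 * (nu + 1) * nu ^ 4 * (2 * F ^ 2 + 1) / ((nu ^ 2 + nu + 1) ^ 2)
      < Real.sqrt (8 * F ^ 2 * nu ^ 4 + nu ^ 2 + 2 * nu + 1) := by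
    rw [Real.lt_sqrt hA0]
    have hkey : (8 * F ^ 2 * nu ^ 4 + nu ^ 2 + 2 * nu + 1) * ((nu ^ 2 + nu + 1) ^ 2) ^ 2
        - ((nu + 1) + 2 * (nu + 1) * nu ^ 4 * (2 * F ^ 2 + 1) / ((nu ^ 2 + nu + 1) ^ 2)) ^ 2
          * ((nu ^ 2 + nu + 1) ^ 2) ^ 2
        = 4 * nu ^ 4 * (-(4 * (nu + 1) ^ 2 * nu ^ 4) * (F ^ 2) ^ 2
          + (2 * ((nu ^ 2 + nu + 1) ^ 2) ^ 2 - 2 * (nu + 1) ^ 2 * (nu ^ 2 + nu + 1) ^ 2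
            - 4 * (nu + 1) ^ 2 * nu ^ 4) * F ^ 2
          - (nu + 1) ^ 2 * ((nu ^ 2 + nu + 1) ^ 2 + nu ^ 4)) := by
      field_simp
      ring
    have h4nu : (0:ℝ) < 4 * nu ^ 4 := by positivity
    have hlt : ((nu + 1) + 2 * (nu + 1) * nu ^ 4 * (2 * F ^ 2 + 1) / ((nu ^ 2 + nu + 1) ^ 2)) ^ 2
          * ((nu ^ 2 + nu + 1) ^ 2) ^ 2
        < (8 * F ^ 2 * nu ^ 4 + nu ^ 2 + 2 * nu + 1) * ((nu ^ 2 + nu + 1) ^ 2) ^ 2 := by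
      nlinarith [mul_pos h4nu hP]
    exact lt_of_mul_lt_mul_right hlt (by positivity)
  have hsqrtHR : Real.sqrt ((1:ℝ) / nu ^ 2) = 1 / nu := by
    rw [show (1:ℝ) / nu ^ 2 = (1 / nu) ^ 2 by field_simp, Real.sqrt_sq (by positivity)]
  show ((-nu - 1 + Real.sqrt (8 * F ^ 2 * nu ^ 4 + nu ^ 2 + 2 * nu + 1)) * (1 / nu ^ 2) /
      (2 * (nu + 1))) * ((1 / nu ^ 2) + Real.sqrt ((1:ℝ) / nu ^ 2) + 1) ^ 2
      - (1 / nu ^ 2) * (2 * F ^ 2 + 1) > 0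
  rw [hsqrtHR]
  set S := Real.sqrt (8 * F ^ 2 * nu ^ 4 + nu ^ 2 + 2 * nu + 1) with hSdef
  have hident : ((-nu - 1 + S) * (1 / nu ^ 2) / (2 * (nu + 1))) *
        ((1 / nu ^ 2) + 1 / nu + 1) ^ 2 - (1 / nu ^ 2) * (2 * F ^ 2 + 1)
      = (S - ((nu + 1) + 2 * (nu + 1) * nu ^ 4 * (2 * F ^ 2 + 1) / ((nu ^ 2 + nu + 1) ^ 2)))
        * ((nu ^ 2 + nu + 1) ^ 2 / (2 * (nu + 1) * nu ^ 6)) := by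
    field_simp
    ring
  rw [hident]
  apply mul_pos (by linarith)
  apply div_pos hDpos
  nlinarith [mul_pos hnu1 (pow_pos hx0 6)]
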